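/- arXiv:1805.01771 — 2 statements merged into one kernel-verified Lean document; each statement's English description precedes it below -/
import Mathlib

section
/- Let G be a connected finite simple graph on n ≥ 3 vertices with degree sequence d_1 ≥ d_2 ≥ ... ≥ d_n. If G has a cut vertex, then d_2 + d_n ≤ n − 1. Equivalently, if d_2 + d_n ≥ n, then G is 2-connected. -/
open SimpleGraph

/-- A graph is 2-connected (biconnected) if it is connected, has at least 3 vertices,
and removing any single vertex leaves a connected graph. -/
def TwoConnected {V : Type*} [Fintype V] (G : SimpleGraph V) : Prop :=
  G.Connected ∧ 3 ≤ Fintype.card V ∧ ∀ v : V, (G.induce ({v}ᶜ : Set V)).Connected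

/-- For a connected graph on `n ≥ 3` vertices with non-increasing degree sequence `d`:
if `G` has a cut vertex then `d₂ + dₙ ≤ n - 1`; equivalently if `d₂ + dₙ ≥ n` then `G`
is 2-connected. -/
theorem stmt_1 {n : ℕ} (hn : 3 ≤ n) (G : SimpleGraph (Fin n)) [DecidableRel G.Adj]
    (hconn : G.Connected) (d : Fin n → ℕ) (hd : Antitone d)
    (σ : Equiv.Perm (Fin n)) (hreal : ∀ i, G.degree (σ i) = d i) :
    ((∃ v : Fin n, ¬ (G.induce ({v}ᶜ : Set (Fin n))).Connected) →
      d ⟨1, by omega⟩ + d ⟨n - 1, by omega⟩ ≤ n - 1) ∧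
    (n ≤ d ⟨1, by omega⟩ + d ⟨n - 1, by omega⟩ → TwoConnected G) := by
  classical
  have key : ∀ v : Fin n, ¬ (G.induce ({v}ᶜ : Set (Fin n))).Connected →
      d ⟨1, by omega⟩ + d ⟨n - 1, by omega⟩ ≤ n - 1 := by
    intro v hv
    set H := G.induce ({v}ᶜ : Set (Fin n)) with hH
    have hne : Nonempty ({v}ᶜ : Set (Fin n)) := by
      obtain ⟨w, hw⟩ := Fintype.exists_ne_of_one_lt_card (by simp; omega) v
      exact ⟨⟨w, by simp [hw]⟩⟩
    have hnp : ∃ x y : ({v}ᶜ : Set (Fin n)), ¬ H.Reachable x y := by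
      by_contra hcon
      push_neg at hcon
      exact hv ((SimpleGraph.connected_iff H).mpr ⟨fun a b => hcon a b, hne⟩)
    obtain ⟨x, y, hxy⟩ := hnp
    set S : Set (Fin n) := {w | ∃ h : w ∈ ({v}ᶜ : Set (Fin n)), H.Reachable x ⟨w, h⟩} with hS
    -- edge lemma
    have edge : ∀ w z : Fin n, w ∈ S → G.Adj w z → z ≠ v → z ∈ S := by
      intro w z hw hadj hzv
      obtain ⟨hwv, hreach⟩ := hw
      have hz : z ∈ ({v}ᶜ : Set (Fin n)) := by simp [hzv]
      refine ⟨hz, hreach.trans (SimpleGraph.Adj.reachable ?_)⟩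
      exact hadj
    set Sf : Finset (Fin n) := S.toFinset with hSf
    set Tf : Finset (Fin n) := (Finset.univ.erase v) \ Sf with hTf
    have hSsub : Sf ⊆ Finset.univ.erase v := by
      intro w hw
      rw [Set.mem_toFinset] at hw
      obtain ⟨hwv, -⟩ := hw
      simp at hwv ⊢
      exact hwv
    have hcard : Sf.card + Tf.card = n - 1 := by
      have h1 : (Finset.univ.erase v).card = n - 1 := by
        rw [Finset.card_erase_of_mem (Finset.mem_univ v)]; simp
      have h2 : Tf.card = (Finset.univ.erase v).card - Sf.card :=
        Finset.card_sdiff_of_subset hSsub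
      have h3 : Sf.card ≤ (Finset.univ.erase v).card := Finset.card_le_card hSsub
      omega
    -- degree bounds
    have degS : ∀ u : Fin n, u ∈ S → G.degree u ≤ Sf.card := by
      intro u hu
      have huf : u ∈ Sf := by rwa [Set.mem_toFinset]
      have hsub : G.neighborFinset u ⊆ insert v (Sf.erase u) := by
        intro z hz
        rw [SimpleGraph.mem_neighborFinset] at hz
        by_cases hzv : z = v
        · simp [hzv]
        · have hzS : z ∈ S := edge u z hu hz hzv
          have hzu : z ≠ u := fun h => G.loopless.irrefl u (h ▸ hz)
          simp [Finset.mem_insert, Finset.mem_erase, hzu, Set.mem_toFinset, hzS, hSf]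
      have h1 : G.degree u ≤ (insert v (Sf.erase u)).card := by
        rw [← SimpleGraph.card_neighborFinset_eq_degree]
        exact Finset.card_le_card hsub
      have h2 := Finset.card_insert_le v (Sf.erase u)
      have h3 := Finset.card_erase_of_mem huf
      have h4 : 1 ≤ Sf.card := Finset.card_pos.mpr ⟨u, huf⟩
      omega
    have degT : ∀ u : Fin n, u ∈ Tf → G.degree u ≤ Tf.card := by
      intro u hu
      have hsub : G.neighborFinset u ⊆ insert v (Tf.erase u) := by
        intro z hz
        rw [SimpleGraph.mem_neighborFinset] at hz
        by_cases hzv : z = v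
        · simp [hzv]
        · have hzu : z ≠ u := fun h => G.loopless.irrefl u (h ▸ hz)
          have huS : u ∉ S := by
            rw [hTf] at hu; simp at hu
            intro hcon
            exact hu.2 (by rwa [Set.mem_toFinset])
          have huv : u ≠ v := by
            rw [hTf] at hu; simp at hu; exact hu.1
          have hzS : z ∉ Sf := by
            rw [Set.mem_toFinset]
            intro hcon
            exact huS (edge z u hcon hz.symm huv)
          simp [Finset.mem_insert, Finset.mem_erase, hzu, hTf, hzv, hzS]
      have h1 : G.degree u ≤ (insert v (Tf.erase u)).card := by
        rw [← SimpleGraph.card_neighborFinset_eq_degree]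
        exact Finset.card_le_card hsub
      have h2 := Finset.card_insert_le v (Tf.erase u)
      have h3 := Finset.card_erase_of_mem hu
      have h4 : 1 ≤ Tf.card := Finset.card_pos.mpr ⟨u, hu⟩
      omega
    -- x ∈ S, y ∈ Tf
    have hxS : (x : Fin n) ∈ S := ⟨x.2, by exact SimpleGraph.Reachable.refl _⟩
    have hyT : (y : Fin n) ∈ Tf := by
      rw [hTf]
      simp only [Finset.mem_sdiff, Finset.mem_erase, Finset.mem_univ, and_true]
      constructor
      · exact y.2
      · rw [Set.mem_toFinset]
        rintro ⟨hy1, hy2⟩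
        exact hxy (by convert hy2)
    -- min degree bound
    have hmin : ∀ u : Fin n, d ⟨n - 1, by omega⟩ ≤ G.degree u := by
      intro u
      have := hreal (σ.symm u)
      rw [Equiv.apply_symm_apply] at this
      rw [this]
      apply hd
      rw [Fin.le_def]
      simp
      omega
    have hdn_s : d ⟨n - 1, by omega⟩ ≤ Sf.card := le_trans (hmin x) (degS x hxS)
    have hdn_t : d ⟨n - 1, by omega⟩ ≤ Tf.card := le_trans (hmin y) (degT y hyT)
    -- second degree bound
    have hdeg_ne : ∀ u : Fin n, u ≠ v → G.degree u ≤ Sf.card ∨ G.degree u ≤ Tf.card := by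
      intro u huv
      by_cases huS : u ∈ S
      · exact Or.inl (degS u huS)
      · refine Or.inr (degT u ?_)
        rw [hTf]
        simp only [Finset.mem_sdiff, Finset.mem_erase, Finset.mem_univ, and_true]
        exact ⟨huv, by rwa [Set.mem_toFinset]⟩
    have hd1 : d ⟨1, by omega⟩ ≤ Sf.card ∨ d ⟨1, by omega⟩ ≤ Tf.card := by
      have h0lt : (0:ℕ) < n := by omega
      have h1lt : (1:ℕ) < n := by omega
      have hab : σ ⟨0, h0lt⟩ ≠ σ ⟨1, h1lt⟩ := by
        intro h
        have h2 := σ.injective h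
        exact absurd (congrArg Fin.val h2) (by simp)
      have hle0 : d ⟨1, h1lt⟩ ≤ G.degree (σ ⟨0, h0lt⟩) := by
        rw [hreal]
        exact hd (by rw [Fin.le_def]; simp)
      have hle1 : d ⟨1, h1lt⟩ ≤ G.degree (σ ⟨1, h1lt⟩) := le_of_eq (hreal _).symm
      by_cases hav : σ ⟨0, h0lt⟩ = v
      · have hbv : σ ⟨1, h1lt⟩ ≠ v := fun h => hab (hav.trans h.symm)
        rcases hdeg_ne _ hbv with h | h
        · exact Or.inl (le_trans hle1 h)
        · exact Or.inr (le_trans hle1 h)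
      · rcases hdeg_ne _ hav with h | h
        · exact Or.inl (le_trans hle0 h)
        · exact Or.inr (le_trans hle0 h)
    rcases hd1 with h | h <;> omega
  refine ⟨fun ⟨v, hv⟩ => key v hv, fun hge => ⟨hconn, by simp; omega, ?_⟩⟩
  intro v
  by_contra hcon
  have := key v hcon
  omega
end

section
/- For every even n ≥ 4, the constant sequence (n/2, n/2, ..., n/2) of length n is a graphical degree sequence and every realization of it is 2-connected; that is, every (n/2)-regular simple graph on n vertices is 2-connected. -/
open SimpleGraph

lemma aux_card_filter_lt (n m : ℕ) (h : m ≤ n) :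
    (Finset.univ.filter (fun j : Fin n => (j:ℕ) < m)).card = m := by
  have : (Finset.univ.filter (fun j : Fin n => (j:ℕ) < m)) = Finset.univ.map (Fin.castLEEmb h) := by
    ext j
    simp only [Finset.mem_filter, Finset.mem_univ, true_and, Finset.mem_map, Fin.castLEEmb,
      Function.Embedding.coeFn_mk]
    constructor
    · intro hj; exact ⟨⟨j, hj⟩, Fin.ext rfl⟩
    · rintro ⟨a, rfl⟩; exact a.isLt
  rw [this, Finset.card_map, Finset.card_univ, Fintype.card_fin]

/-- Two distinct nonadjacent vertices in an `(n/2)`-regular graph on `n` vertices (`n` even,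
`n ≥ 4`) have a common neighbor distinct from any prescribed vertex `v`. -/
lemma aux_common_neighbor {n : ℕ} (hn : 4 ≤ n) (heven : Even n)
    (G : SimpleGraph (Fin n)) [DecidableRel G.Adj] (hdeg : ∀ v, G.degree v = n / 2)
    {u w : Fin n} (hne : u ≠ w) (hadj : ¬ G.Adj u w) (v : Fin n) :
    ∃ x, x ≠ v ∧ G.Adj u x ∧ G.Adj w x := by
  obtain ⟨m, hm⟩ := heven
  have hmn : n = 2 * m := by omega
  set A := G.neighborFinset u with hA
  set B := G.neighborFinset w with hB
  have hAcard : A.card = m := by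
    rw [hA, G.card_neighborFinset_eq_degree, hdeg]; omega
  have hBcard : B.card = m := by
    rw [hB, G.card_neighborFinset_eq_degree, hdeg]; omega
  have hsub : A ∪ B ⊆ Finset.univ \ {u, w} := by
    intro x hx
    simp only [Finset.mem_union, hA, hB, SimpleGraph.mem_neighborFinset] at hx
    simp only [Finset.mem_sdiff, Finset.mem_univ, true_and, Finset.mem_insert,
      Finset.mem_singleton]
    push_neg
    rcases hx with hx | hx
    · exact ⟨fun h => G.loopless.irrefl u (h ▸ hx), fun h => hadj (h ▸ hx)⟩
    · exact ⟨fun h => hadj (h ▸ hx).symm, fun h => G.loopless.irrefl w (h ▸ hx)⟩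
  have hcardsub : (A ∪ B).card ≤ n - 2 := by
    have h2 : ({u, w} : Finset (Fin n)).card = 2 := by
      rw [Finset.card_insert_of_notMem (by simp [hne]), Finset.card_singleton]
    have hsd : (Finset.univ \ ({u, w} : Finset (Fin n))).card = n - 2 := by
      rw [Finset.card_sdiff_of_subset (Finset.subset_univ _), h2, Finset.card_univ, Fintype.card_fin]
    exact (Finset.card_le_card hsub).trans hsd.le
  have hinter : 1 < (A ∩ B).card := by
    have := Finset.card_union_add_card_inter A B
    omega
  obtain ⟨x, hx, hxv⟩ := Finset.exists_mem_ne hinter v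
  refine ⟨x, hxv, ?_, ?_⟩
  · have := Finset.mem_of_mem_inter_left hx
    rwa [hA, SimpleGraph.mem_neighborFinset] at this
  · have := Finset.mem_of_mem_inter_right hx
    rwa [hB, SimpleGraph.mem_neighborFinset] at this

/-- The complete bipartite graph on `Fin n` with parts `{i < m}` and `{i ≥ m}`. -/
def halfGraph (n m : ℕ) : SimpleGraph (Fin n) where
  Adj i j := decide ((i:ℕ) < m) ≠ decide ((j:ℕ) < m)
  symm := ⟨fun _ _ h => Ne.symm h⟩
  loopless := ⟨fun _ h => h rfl⟩

instance halfGraph_decAdj (n m : ℕ) : DecidableRel (halfGraph n m).Adj :=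
  fun i j => inferInstanceAs (Decidable (decide ((i:ℕ) < m) ≠ decide ((j:ℕ) < m)))

lemma halfGraph_adj {n m : ℕ} {i j : Fin n} :
    (halfGraph n m).Adj i j ↔ ¬ (((i:ℕ) < m) ↔ ((j:ℕ) < m)) := by
  simp [halfGraph, Ne, decide_eq_decide]

lemma halfGraph_degree {n m : ℕ} (hmn : n = 2 * m) (v : Fin n) :
    (halfGraph n m).degree v = m := by
  classical
  rw [← SimpleGraph.card_neighborFinset_eq_degree, SimpleGraph.neighborFinset_eq_filter]
  have h1 := aux_card_filter_lt n m (by omega)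
  have h2 := Finset.card_filter_add_card_filter_not
    (s := (Finset.univ : Finset (Fin n))) (p := fun j : Fin n => (j:ℕ) < m)
  rw [Finset.card_univ, Fintype.card_fin] at h2
  by_cases hv : (v:ℕ) < m
  · have he : Finset.univ.filter (fun j => (halfGraph n m).Adj v j)
        = Finset.univ.filter (fun j : Fin n => ¬ ((j:ℕ) < m)) := by
      ext j
      simp only [Finset.mem_filter, Finset.mem_univ, true_and, halfGraph_adj]
      constructor
      · intro h hj; exact h ⟨fun _ => hj, fun _ => hv⟩
      · intro h hiff; exact h (hiff.mp hv)
    rw [he]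
    omega
  · have he : Finset.univ.filter (fun j => (halfGraph n m).Adj v j)
        = Finset.univ.filter (fun j : Fin n => (j:ℕ) < m) := by
      ext j
      simp only [Finset.mem_filter, Finset.mem_univ, true_and, halfGraph_adj]
      constructor
      · intro h
        by_contra hj
        exact h ⟨fun hv' => absurd hv' hv, fun hj' => absurd hj' hj⟩
      · intro hj hiff; exact hv (hiff.mpr hj)
    rw [he, h1]

/-- For every even `n ≥ 4`, the constant sequence `(n/2, ..., n/2)` of length `n` is
graphical and every realization of it, i.e. every `(n/2)`-regular simple graph on `n`
vertices, is 2-connected. -/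
theorem stmt_11 {n : ℕ} (hn : 4 ≤ n) (heven : Even n) :
    (∃ (G : SimpleGraph (Fin n)) (_ : DecidableRel G.Adj), ∀ v, G.degree v = n / 2) ∧
    (∀ (G : SimpleGraph (Fin n)) (_ : DecidableRel G.Adj),
      (∀ v, G.degree v = n / 2) → TwoConnected G) := by
  obtain ⟨m, hm⟩ := heven
  have hmn : n = 2 * m := by omega
  constructor
  · exact ⟨halfGraph n m, halfGraph_decAdj n m,
      fun v => by rw [halfGraph_degree hmn v]; omega⟩
  · intro G _ hdeg
    refine ⟨?_, ?_, ?_⟩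
    · haveI : Nonempty (Fin n) := ⟨⟨0, by omega⟩⟩
      refine ⟨fun u w => ?_⟩
      by_cases huw : u = w
      · subst huw; rfl
      by_cases hadj : G.Adj u w
      · exact hadj.reachable
      obtain ⟨x, _, hux, hwx⟩ :=
        aux_common_neighbor hn ⟨m, hm⟩ G hdeg huw hadj u
      exact hux.reachable.trans hwx.reachable.symm
    · simp only [Fintype.card_fin]; omega
    · intro v
      haveI : Nonempty ({v}ᶜ : Set (Fin n)) := by
        by_cases h0 : v = ⟨0, by omega⟩
        · exact ⟨⟨⟨1, by omega⟩, by simp [h0, Fin.ext_iff]⟩⟩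
        · exact ⟨⟨⟨0, by omega⟩, by
            simp only [Set.mem_compl_iff, Set.mem_singleton_iff]
            exact fun h => h0 (h ▸ rfl)⟩⟩
      refine ⟨?_⟩
      rintro ⟨u, hu⟩ ⟨w, hw⟩
      simp only [Set.mem_compl_iff, Set.mem_singleton_iff] at hu hw
      by_cases huw : u = w
      · subst huw
        have : (⟨u, hu⟩ : ({v}ᶜ : Set (Fin n))) = ⟨u, hw⟩ := rfl
        rw [this]
      by_cases hadj : G.Adj u w
      · exact SimpleGraph.Adj.reachable (by simpa using hadj)
      obtain ⟨x, hxv, hux, hwx⟩ :=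
        aux_common_neighbor hn ⟨m, hm⟩ G hdeg huw hadj v
      have hx : (x : Fin n) ∈ ({v}ᶜ : Set (Fin n)) := hxv
      have r1 : (G.induce ({v}ᶜ : Set (Fin n))).Reachable ⟨u, hu⟩ ⟨x, hx⟩ :=
        SimpleGraph.Adj.reachable (by simpa using hux)
      have r2 : (G.induce ({v}ᶜ : Set (Fin n))).Reachable ⟨w, hw⟩ ⟨x, hx⟩ :=
        SimpleGraph.Adj.reachable (by simpa using hwx)
      exact r1.trans r2.symm
end
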